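/- Exponential family moment bound: Let Y have density y ↦ h(y,φ) exp{(yη − B(η))/φ} with respect to a dominating measure λ, where η lies in a compact interval [c,d] strictly contained in the domain of B. Then there exist a₀ > 0 and M > 0 depending only on [c,d], ε (with [c−ε,d+ε] in the domain of B) and φ such that E|Y|^s ≤ a₀ s! M^{s−2} for all integers s ≥ 1. -/

import Mathlib

open MeasureTheory

lemma aux_pow_le_factorial_mul_exp (x : ℝ) (hx : 0 ≤ x) (s : ℕ) :
    x ^ s ≤ s.factorial * Real.exp x := by
  have h1 : x ^ s / s.factorial ≤ Real.exp x := by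
    refine le_trans ?_ (Real.sum_le_exp_of_nonneg hx (s + 1))
    have := Finset.single_le_sum (f := fun i => x ^ i / i.factorial)
      (fun i _ => by positivity) (Finset.self_mem_range_succ s)
    simpa using this
  have hfac : (0 : ℝ) < s.factorial := by positivity
  calc x ^ s = (x ^ s / s.factorial) * s.factorial := by field_simp
    _ ≤ Real.exp x * s.factorial := by
        exact mul_le_mul_of_nonneg_right h1 hfac.le
    _ = s.factorial * Real.exp x := by ring

/-- exponential family moment bound. If `Y` has density
`y ↦ h(y,φ) exp((yη − B(η))/φ)` w.r.t. `λ` and `η` ranges in a compact interval `[c,d]`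
with `[c−ε, d+ε]` contained in the domain of `B`, then there exist `a₀, M > 0` depending
only on `[c,d]`, `ε` and `φ` such that `E|Y|^s ≤ a₀ s! M^{s−2}` for all integers `s ≥ 1`. -/
theorem stmt11 (lam : Measure ℝ) (h : ℝ → ℝ) (hmeas : Measurable h)
    (hnonneg : ∀ y, 0 ≤ h y)
    (φ : ℝ) (hφ : 0 < φ)
    (B : ℝ → ℝ) (c d ε : ℝ) (hcd : c ≤ d) (hε : 0 < ε)
    -- the log-partition identity holds (with integrability) on [c−ε, d+ε]
    (hB : ∀ η ∈ Set.Icc (c - ε) (d + ε),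
      Integrable (fun y => h y * Real.exp (y * η / φ)) lam ∧
      Real.exp (B η / φ) = ∫ y, h y * Real.exp (y * η / φ) ∂lam) :
    ∃ a₀ > (0 : ℝ), ∃ M > (0 : ℝ), ∀ η ∈ Set.Icc c d, ∀ s : ℕ, 1 ≤ s →
      Integrable (fun y => |y| ^ s * (h y * Real.exp ((y * η - B η) / φ))) lam ∧
      (∫ y, |y| ^ s * (h y * Real.exp ((y * η - B η) / φ)) ∂lam)
        ≤ a₀ * (Nat.factorial s) * M ^ (s - 2) := by
  have hmem : ∀ θ ∈ Set.Icc (c - ε) (d + ε), θ ∈ Set.Icc (c - ε) (d + ε) := fun θ hθ => hθ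
  have hce : (c - ε) ∈ Set.Icc (c - ε) (d + ε) := ⟨le_refl _, by linarith⟩
  have hde : (d + ε) ∈ Set.Icc (c - ε) (d + ε) := ⟨by linarith, le_refl _⟩
  have hsub : ∀ η ∈ Set.Icc c d, η ∈ Set.Icc (c - ε) (d + ε) :=
    fun η hη => ⟨by linarith [hη.1], by linarith [hη.2]⟩
  -- The dominating function G
  set G : ℝ → ℝ := fun y => Real.exp (y * (c - ε) / φ) + Real.exp (y * (d + ε) / φ) with hGdef
  have hG_int : Integrable (fun y => h y * G y) lam := by
    have := ((hB _ hce).1.add (hB _ hde).1)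
    exact this.congr (Filter.Eventually.of_forall fun y => by simp [hGdef, mul_add])
  -- pointwise bound exp(y θ / φ) ≤ G y for θ ∈ [c-ε, d+ε]
  have hGbound : ∀ θ ∈ Set.Icc (c - ε) (d + ε), ∀ y : ℝ, Real.exp (y * θ / φ) ≤ G y := by
    intro θ hθ y
    rcases le_or_gt 0 y with hy | hy
    · refine le_trans ?_ (le_add_of_nonneg_left (Real.exp_pos _).le)
      gcongr
      exact hθ.2
    · refine le_trans ?_ (le_add_of_nonneg_right (Real.exp_pos _).le)
      have : y * θ ≤ y * (c - ε) := mul_le_mul_of_nonpos_left hθ.1 hy.le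
      gcongr
  -- the minorant and its integral m
  set g : ℝ → ℝ := fun y => min (Real.exp (y * c / φ)) (Real.exp (y * d / φ)) with hgdef
  have hc_mem : c ∈ Set.Icc (c - ε) (d + ε) := ⟨by linarith, by linarith⟩
  have hg_int : Integrable (fun y => h y * g y) lam := by
    refine (hB c hc_mem).1.mono' ?_ ?_
    · exact (hmeas.mul (((Real.continuous_exp.comp (by continuity)).min
        (Real.continuous_exp.comp (by continuity))).measurable)).aestronglyMeasurable
    · filter_upwards with y
      rw [Real.norm_eq_abs, abs_of_nonneg (mul_nonneg (hnonneg y)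
        (le_min (Real.exp_pos _).le (Real.exp_pos _).le))]
      exact mul_le_mul_of_nonneg_left (min_le_left _ _) (hnonneg y)
  set m : ℝ := ∫ y, h y * g y ∂lam with hmdef
  have hg_nonneg : ∀ y, 0 ≤ h y * g y := fun y =>
    mul_nonneg (hnonneg y) (le_min (Real.exp_pos _).le (Real.exp_pos _).le)
  have hm_pos : 0 < m := by
    rcases lt_or_ge 0 m with hm | hm
    · exact hm
    exfalso
    have hm0 : m = 0 := le_antisymm hm (integral_nonneg hg_nonneg)
    rw [hmdef, integral_eq_zero_iff_of_nonneg hg_nonneg hg_int] at hm0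
    have hh0 : (fun y => h y * Real.exp (y * c / φ)) =ᵐ[lam] 0 := by
      filter_upwards [hm0] with y hy
      have hgy : g y ≠ 0 := (lt_min (Real.exp_pos _) (Real.exp_pos _)).ne'
      simp only [Pi.zero_apply, mul_eq_zero] at hy
      rcases hy with h0 | h0
      · simp [h0]
      · exact absurd h0 hgy
    have h2 := (hB c hc_mem).2
    rw [integral_congr_ae hh0] at h2
    simp at h2
  -- lower bound on the partition function
  have hZ_lb : ∀ η ∈ Set.Icc c d, m ≤ Real.exp (B η / φ) := by
    intro η hη
    rw [(hB η (hsub η hη)).2]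
    refine integral_mono hg_int (hB η (hsub η hη)).1 ?_
    intro y
    refine mul_le_mul_of_nonneg_left ?_ (hnonneg y)
    rcases le_or_gt 0 y with hy | hy
    · refine le_trans (min_le_left _ _) ?_
      gcongr
      exact hη.1
    · refine le_trans (min_le_right _ _) ?_
      have : y * d ≤ y * η := mul_le_mul_of_nonpos_left hη.2 hy.le
      gcongr
  -- constants
  set K : ℝ := ∫ y, h y * G y ∂lam with hKdef
  have hK_nonneg : 0 ≤ K := integral_nonneg fun y =>
    mul_nonneg (hnonneg y) (add_pos (Real.exp_pos _) (Real.exp_pos _)).le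
  set M : ℝ := max (φ / ε) 1 with hMdef
  have hM1 : 1 ≤ M := le_max_right _ _
  have hM_pos : 0 < M := lt_of_lt_of_le one_pos hM1
  set a₀ : ℝ := (K / m) * M ^ 2 + 1 with ha₀def
  have ha₀_pos : 0 < a₀ := by positivity
  refine ⟨a₀, ha₀_pos, M, hM_pos, ?_⟩
  intro η hη s hs
  -- key pointwise bound
  have hkey : ∀ y : ℝ, |y| ^ s * (h y * Real.exp ((y * η - B η) / φ))
      ≤ (s.factorial * (φ / ε) ^ s / m) * (h y * G y) := by
    intro y
    have hexp_split : Real.exp ((y * η - B η) / φ)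
        = Real.exp (y * η / φ) * (Real.exp (B η / φ))⁻¹ := by
      rw [sub_div, Real.exp_sub, div_eq_mul_inv]
    -- |y|^s ≤ s! (φ/ε)^s exp(|y| ε / φ)
    have hpow : |y| ^ s ≤ s.factorial * (φ / ε) ^ s * Real.exp (|y| * ε / φ) := by
      have hx : (0 : ℝ) ≤ |y| * ε / φ := by positivity
      have := aux_pow_le_factorial_mul_exp _ hx s
      have heq : (|y| * ε / φ) ^ s = |y| ^ s * (ε / φ) ^ s := by
        rw [← mul_pow]; ring_nf
      rw [heq] at this
      have hεφ : (0 : ℝ) < (ε / φ) ^ s := by positivity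
      calc |y| ^ s = |y| ^ s * (ε / φ) ^ s * (φ / ε) ^ s := by
            rw [mul_assoc, ← mul_pow]
            field_simp
            simp
        _ ≤ s.factorial * Real.exp (|y| * ε / φ) * (φ / ε) ^ s := by
            exact mul_le_mul_of_nonneg_right this (by positivity)
        _ = s.factorial * (φ / ε) ^ s * Real.exp (|y| * ε / φ) := by ring
    -- exp(|y| ε / φ) * exp(y η / φ) ≤ G y
    have hprod : Real.exp (|y| * ε / φ) * Real.exp (y * η / φ) ≤ G y := by
      rw [← Real.exp_add]
      rcases le_or_gt 0 y with hy | hy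
      · rw [abs_of_nonneg hy]
        have : y * ε / φ + y * η / φ = y * (η + ε) / φ := by ring
        rw [this]
        exact hGbound (η + ε) ⟨by linarith [hη.1], by linarith [hη.2]⟩ y
      · rw [abs_of_neg hy]
        have : -y * ε / φ + y * η / φ = y * (η - ε) / φ := by ring
        rw [this]
        exact hGbound (η - ε) ⟨by linarith [hη.1], by linarith [hη.2]⟩ y
    have hinv : (Real.exp (B η / φ))⁻¹ ≤ m⁻¹ :=
      inv_anti₀ hm_pos (hZ_lb η hη)
    have hG_nonneg : 0 ≤ G y := (add_pos (Real.exp_pos _) (Real.exp_pos _)).le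
    calc |y| ^ s * (h y * Real.exp ((y * η - B η) / φ))
        = (|y| ^ s * Real.exp (y * η / φ)) * (Real.exp (B η / φ))⁻¹ * h y := by
          rw [hexp_split]; ring
      _ ≤ ((s.factorial * (φ / ε) ^ s * Real.exp (|y| * ε / φ)) * Real.exp (y * η / φ))
            * (Real.exp (B η / φ))⁻¹ * h y := by
          refine mul_le_mul_of_nonneg_right (mul_le_mul_of_nonneg_right
            (mul_le_mul_of_nonneg_right hpow (Real.exp_pos _).le) (by positivity)) (hnonneg y)
      _ = (s.factorial * (φ / ε) ^ s) * (Real.exp (|y| * ε / φ) * Real.exp (y * η / φ))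
            * (Real.exp (B η / φ))⁻¹ * h y := by ring
      _ ≤ (s.factorial * (φ / ε) ^ s) * G y * m⁻¹ * h y := by
          refine mul_le_mul_of_nonneg_right ?_ (hnonneg y)
          refine mul_le_mul (mul_le_mul_of_nonneg_left hprod (by positivity)) hinv
            (by positivity) (by positivity)
      _ = (s.factorial * (φ / ε) ^ s / m) * (h y * G y) := by
          field_simp
  have hC_nonneg : (0:ℝ) ≤ s.factorial * (φ / ε) ^ s / m := by positivity
  have hdom_int : Integrable (fun y => (s.factorial * (φ / ε) ^ s / m) * (h y * G y)) lam :=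
    hG_int.const_mul _
  have hintegrand_nonneg : ∀ y : ℝ, 0 ≤ |y| ^ s * (h y * Real.exp ((y * η - B η) / φ)) :=
    fun y => mul_nonneg (by positivity) (mul_nonneg (hnonneg y) (Real.exp_pos _).le)
  have hint : Integrable (fun y => |y| ^ s * (h y * Real.exp ((y * η - B η) / φ))) lam := by
    refine hdom_int.mono' ?_ ?_
    · exact ((measurable_abs.pow_const s).mul (hmeas.mul
        (Real.measurable_exp.comp (by fun_prop)))).aestronglyMeasurable
    · filter_upwards with y
      rw [Real.norm_eq_abs, abs_of_nonneg (hintegrand_nonneg y)]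
      exact hkey y
  refine ⟨hint, ?_⟩
  have hIle : (∫ y, |y| ^ s * (h y * Real.exp ((y * η - B η) / φ)) ∂lam)
      ≤ (s.factorial * (φ / ε) ^ s / m) * K := by
    calc (∫ y, |y| ^ s * (h y * Real.exp ((y * η - B η) / φ)) ∂lam)
        ≤ ∫ y, (s.factorial * (φ / ε) ^ s / m) * (h y * G y) ∂lam :=
          integral_mono hint hdom_int hkey
      _ = (s.factorial * (φ / ε) ^ s / m) * K := by
          rw [integral_const_mul]
  refine hIle.trans ?_
  -- (φ/ε)^s ≤ M^2 * M^(s-2)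
  have hφε_le : (φ / ε) ^ s ≤ M ^ 2 * M ^ (s - 2) := by
    have h1 : (φ / ε) ^ s ≤ M ^ s :=
      pow_le_pow_left₀ (div_nonneg hφ.le hε.le) (le_max_left _ _) s
    refine h1.trans ?_
    rcases le_or_gt s 2 with hs2 | hs2
    · have : M ^ s ≤ M ^ 2 := pow_le_pow_right₀ hM1 hs2
      have h0 : s - 2 = 0 := Nat.sub_eq_zero_of_le hs2
      rw [h0, pow_zero, mul_one]
      exact this
    · have : 2 + (s - 2) = s := by omega
      rw [← pow_add, this]
  calc (↑s.factorial * (φ / ε) ^ s / m) * K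
      = (K / m) * (φ / ε) ^ s * s.factorial := by ring
    _ ≤ (K / m) * (M ^ 2 * M ^ (s - 2)) * s.factorial := by
        refine mul_le_mul_of_nonneg_right
          (mul_le_mul_of_nonneg_left hφε_le (div_nonneg hK_nonneg hm_pos.le))
          (Nat.cast_nonneg _)
    _ = ((K / m) * M ^ 2) * s.factorial * M ^ (s - 2) := by ring
    _ ≤ a₀ * s.factorial * M ^ (s - 2) := by
        refine mul_le_mul_of_nonneg_right (mul_le_mul_of_nonneg_right ?_
          (Nat.cast_nonneg _)) (pow_nonneg hM_pos.le _)
        rw [ha₀def]; linarith
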